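/- The quantum advantage ratio R(n_p, n_e) = [(1 + n_e + √(n_e(1+n_e)))/(1 + n_e + √(n_p n_e(1+n_e)/(1+n_p)))]² tends to 4 in the iterated limit n_p → 0⁺ followed by n_e → ∞, and tends to 1 as n_p → ∞ for any fixed n_e > 0, and equals 1 when n_e = 0. -/

import Mathlib

open Filter Topology

/-- The quantum advantage ratio. -/
noncomputable def qaR (np ne : ℝ) : ℝ :=
  ((1 + ne + Real.sqrt (ne * (1 + ne)))
    / (1 + ne + Real.sqrt (np * ne * (1 + ne) / (1 + np)))) ^ 2

lemma hdiv_aux : Tendsto (fun x : ℝ => x / (1 + x)) atTop (𝓝 1) := by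
  have h0 : Tendsto (fun x : ℝ => (1 + x)⁻¹) atTop (𝓝 0) :=
    tendsto_inv_atTop_zero.comp (tendsto_atTop_add_const_left atTop 1 tendsto_id)
  have h1 : Tendsto (fun x : ℝ => 1 - (1 + x)⁻¹) atTop (𝓝 (1 - 0)) :=
    tendsto_const_nhds.sub h0
  rw [sub_zero] at h1
  refine h1.congr' ?_
  filter_upwards [eventually_gt_atTop (0 : ℝ)] with x hx
  have hne : (1 : ℝ) + x ≠ 0 := by positivity
  field_simp
  ring

/-- R → 4 in the iterated limit n_p → 0⁺ then n_e → ∞; R → 1 as n_p → ∞ for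
    fixed n_e > 0; and R = 1 when n_e = 0. -/
theorem quantum_advantage_limits :
    (∀ ne : ℝ, 0 < ne →
      Tendsto (fun np => qaR np ne) (𝓝[>] 0)
        (𝓝 (((1 + ne + Real.sqrt (ne * (1 + ne))) / (1 + ne)) ^ 2))) ∧
    Tendsto (fun ne : ℝ => ((1 + ne + Real.sqrt (ne * (1 + ne))) / (1 + ne)) ^ 2)
      atTop (𝓝 4) ∧
    (∀ ne : ℝ, 0 < ne → Tendsto (fun np => qaR np ne) atTop (𝓝 1)) ∧
    (∀ np : ℝ, qaR np 0 = 1) := by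
  refine ⟨?_, ?_, ?_, ?_⟩
  · -- np → 0⁺
    intro ne hne
    have hA : ContinuousAt (fun np : ℝ => qaR np ne) 0 := by
      unfold qaR
      apply ContinuousAt.pow
      apply ContinuousAt.div
      · exact continuousAt_const
      · apply ContinuousAt.add continuousAt_const
        apply Real.continuous_sqrt.continuousAt.comp
        exact ContinuousAt.div (by fun_prop) (by fun_prop) (by norm_num)
      · have : (0 : ℝ) * ne * (1 + ne) / (1 + 0) = 0 := by ring
        rw [this, Real.sqrt_zero]
        positivity
    have hval : qaR 0 ne = ((1 + ne + Real.sqrt (ne * (1 + ne))) / (1 + ne)) ^ 2 := by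
      simp [qaR]
    exact hval ▸ hA.tendsto.mono_left nhdsWithin_le_nhds
  · -- ne → ∞
    have hsq : Tendsto (fun ne : ℝ => Real.sqrt (ne / (1 + ne))) atTop (𝓝 1) := by
      have := (Real.continuous_sqrt.tendsto 1).comp hdiv_aux
      simpa [Function.comp_def] using this
    have h2 : Tendsto (fun ne : ℝ => (1 + Real.sqrt (ne / (1 + ne))) ^ 2) atTop
        (𝓝 ((1 + 1) ^ 2)) := (tendsto_const_nhds.add hsq).pow 2
    norm_num at h2
    refine h2.congr' ?_
    filter_upwards [eventually_gt_atTop (0 : ℝ)] with ne hne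
    have hb : (0 : ℝ) < 1 + ne := by linarith
    have hbs : Real.sqrt (1 + ne) > 0 := Real.sqrt_pos.mpr hb
    have hmul : Real.sqrt (ne * (1 + ne)) = Real.sqrt ne * Real.sqrt (1 + ne) :=
      Real.sqrt_mul hne.le _
    have hdiv : Real.sqrt (ne / (1 + ne)) = Real.sqrt ne / Real.sqrt (1 + ne) :=
      Real.sqrt_div hne.le _
    have hself : Real.sqrt (1 + ne) * Real.sqrt (1 + ne) = 1 + ne :=
      Real.mul_self_sqrt hb.le
    rw [hdiv, hmul]
    congr 1
    field_simp
    linear_combination (-(Real.sqrt ne)) * hself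
  · -- np → ∞
    intro ne hne
    have hL : (0 : ℝ) < 1 + ne + Real.sqrt (ne * (1 + ne)) := by positivity
    have h1 : Tendsto (fun np : ℝ => np * ne * (1 + ne) / (1 + np)) atTop
        (𝓝 (ne * (1 + ne))) := by
      have h := hdiv_aux.const_mul (ne * (1 + ne))
      rw [mul_one] at h
      refine h.congr fun x => by ring
    have h2 : Tendsto (fun np : ℝ => Real.sqrt (np * ne * (1 + ne) / (1 + np))) atTop
        (𝓝 (Real.sqrt (ne * (1 + ne)))) := (Real.continuous_sqrt.tendsto _).comp h1
    have h3 : Tendsto (fun np : ℝ => 1 + ne + Real.sqrt (np * ne * (1 + ne) / (1 + np)))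
        atTop (𝓝 (1 + ne + Real.sqrt (ne * (1 + ne)))) := tendsto_const_nhds.add h2
    have h4 : Tendsto (fun np : ℝ => qaR np ne) atTop
        (𝓝 (((1 + ne + Real.sqrt (ne * (1 + ne))) /
          (1 + ne + Real.sqrt (ne * (1 + ne)))) ^ 2)) :=
      (((tendsto_const_nhds :
          Tendsto (fun _ : ℝ => 1 + ne + Real.sqrt (ne * (1 + ne))) atTop
            (𝓝 (1 + ne + Real.sqrt (ne * (1 + ne))))).div h3 hL.ne').pow 2)
    simpa [div_self hL.ne'] using h4
  · intro np
    have : np * 0 * (1 + 0) / (1 + np) = 0 := by ring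
    simp [qaR, this]
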